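/- Let X ∈ ℝ^{N×d} and Y ∈ ℝ^{N×K}, and suppose there exists W with XW = Y. Then the minimum of ‖W‖_{S_{2/L}}^{2/L} over all W satisfying XW = Y is attained at W = X†Y, and the minimum value is ‖X†Y‖_{S_{2/L}}^{2/L}. -/

import Mathlib

open Matrix

/-- The `j`-th singular value (unsorted) of a real matrix. -/
noncomputable def singVal {a b : ℕ} (M : Matrix (Fin a) (Fin b) ℝ) (j : Fin b) : ℝ :=
  Real.sqrt ((Matrix.isHermitian_conjTranspose_mul_self M).eigenvalues j)

/-- `Xd` is the Moore–Penrose pseudoinverse of `X` (the four Penrose conditions). -/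
def IsMoorePenrose {a b : ℕ} (X : Matrix (Fin a) (Fin b) ℝ) (Xd : Matrix (Fin b) (Fin a) ℝ) : Prop :=
  X * Xd * X = X ∧ Xd * X * Xd = Xd ∧ (X * Xd)ᵀ = X * Xd ∧ (Xd * X)ᵀ = Xd * X

section Helpers

open Finset
open scoped RealInnerProductSpace

variable {n : ℕ}

lemma herm_transpose {A : Matrix (Fin n) (Fin n) ℝ} (hA : A.IsHermitian) : Aᵀ = A := by
  simpa using hA.eq

lemma inner_eq_dot (x y : EuclideanSpace ℝ (Fin n)) : ⟪x, y⟫ = x ⬝ᵥ y := by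
  rw [PiLp.inner_apply]; simp [dotProduct, mul_comm]

lemma dot_eq_inner_toLin (A : Matrix (Fin n) (Fin n) ℝ) (x : EuclideanSpace ℝ (Fin n)) :
    x ⬝ᵥ (A *ᵥ x) = ⟪x, Matrix.toEuclideanLin A x⟫ := by
  rw [inner_eq_dot]
  rfl

lemma toLin_eigen {A : Matrix (Fin n) (Fin n) ℝ} (hA : A.IsHermitian) (j : Fin n) :
    Matrix.toEuclideanLin A (hA.eigenvectorBasis j) = hA.eigenvalues j • hA.eigenvectorBasis j := by
  apply (WithLp.equiv 2 _).injective
  ext i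
  have := congrFun (hA.mulVec_eigenvectorBasis j) i
  simpa [Matrix.toEuclideanLin_apply] using this

lemma quad_eq_sum {A : Matrix (Fin n) (Fin n) ℝ} (hA : A.IsHermitian)
    (x : EuclideanSpace ℝ (Fin n)) :
    ⟪x, Matrix.toEuclideanLin A x⟫
      = ∑ j, hA.eigenvalues j * (hA.eigenvectorBasis.repr x j)^2 := by
  have hsymm : (Matrix.toEuclideanLin A : _ →ₗ[ℝ] _).IsSymmetric :=
    (Matrix.isHermitian_iff_isSymmetric).mp hA
  rw [← hA.eigenvectorBasis.sum_inner_mul_inner x (Matrix.toEuclideanLin A x)]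
  refine Finset.sum_congr rfl fun j _ => ?_
  have : ⟪hA.eigenvectorBasis j, Matrix.toEuclideanLin A x⟫
      = hA.eigenvalues j * ⟪hA.eigenvectorBasis j, x⟫ := by
    rw [← hsymm (hA.eigenvectorBasis j) x, toLin_eigen hA j, inner_smul_left]
    simp
  rw [this, OrthonormalBasis.repr_apply_apply, real_inner_comm x]
  ring

lemma repr_zero_of_mem_span {v : OrthonormalBasis (Fin n) ℝ (EuclideanSpace ℝ (Fin n))}
    {s : Finset (Fin n)} {x : EuclideanSpace ℝ (Fin n)}
    (hx : x ∈ Submodule.span ℝ (v '' (s : Set (Fin n)))) {j : Fin n} (hj : j ∉ s) :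
    v.repr x j = 0 := by
  rw [OrthonormalBasis.repr_apply_apply]
  induction hx using Submodule.span_induction with
  | mem y hy =>
    obtain ⟨i, hi, rfl⟩ := hy
    have : i ≠ j := fun h => hj (h ▸ hi)
    exact v.orthonormal.2 (Ne.symm this)
  | zero => simp
  | add y z _ _ hy hz => rw [inner_add_right, hy, hz, add_zero]
  | smul a y _ hy => rw [inner_smul_right, hy, mul_zero]

lemma parseval (v : OrthonormalBasis (Fin n) ℝ (EuclideanSpace ℝ (Fin n)))
    (x : EuclideanSpace ℝ (Fin n)) : ∑ j, (v.repr x j)^2 = ‖x‖^2 := by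
  rw [← real_inner_self_eq_norm_sq, ← v.sum_inner_mul_inner x x]
  refine Finset.sum_congr rfl fun j _ => ?_
  rw [OrthonormalBasis.repr_apply_apply, real_inner_comm x]
  ring

lemma quad_lower {A : Matrix (Fin n) (Fin n) ℝ} (hA : A.IsHermitian)
    {s : Finset (Fin n)} {x : EuclideanSpace ℝ (Fin n)} {c : ℝ}
    (hx : x ∈ Submodule.span ℝ (hA.eigenvectorBasis '' (s : Set (Fin n))))
    (hc : ∀ i ∈ s, c ≤ hA.eigenvalues i) :
    c * ‖x‖^2 ≤ ⟪x, Matrix.toEuclideanLin A x⟫ := by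
  rw [quad_eq_sum hA, ← parseval hA.eigenvectorBasis x, Finset.mul_sum]
  refine Finset.sum_le_sum fun j _ => ?_
  by_cases hj : j ∈ s
  · exact mul_le_mul_of_nonneg_right (hc j hj) (sq_nonneg _)
  · rw [repr_zero_of_mem_span hx hj]; simp

lemma quad_upper {A : Matrix (Fin n) (Fin n) ℝ} (hA : A.IsHermitian)
    {s : Finset (Fin n)} {x : EuclideanSpace ℝ (Fin n)} {c : ℝ}
    (hx : x ∈ Submodule.span ℝ (hA.eigenvectorBasis '' (s : Set (Fin n))))
    (hc : ∀ i ∈ s, hA.eigenvalues i ≤ c) :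
    ⟪x, Matrix.toEuclideanLin A x⟫ ≤ c * ‖x‖^2 := by
  rw [quad_eq_sum hA, ← parseval hA.eigenvectorBasis x, Finset.mul_sum]
  refine Finset.sum_le_sum fun j _ => ?_
  by_cases hj : j ∈ s
  · exact mul_le_mul_of_nonneg_right (hc j hj) (sq_nonneg _)
  · rw [repr_zero_of_mem_span hx hj]; simp

lemma finrank_span_basis_image (v : OrthonormalBasis (Fin n) ℝ (EuclideanSpace ℝ (Fin n)))
    (s : Finset (Fin n)) :
    Module.finrank ℝ (Submodule.span ℝ (v '' (s : Set (Fin n)))) = s.card := by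
  rw [Set.image_eq_range]
  rw [show (fun x : (s : Set (Fin n)) => v ↑x) = ⇑v ∘ Subtype.val from rfl]
  rw [finrank_span_eq_card ((v.orthonormal.linearIndependent).comp _ Subtype.val_injective)]
  simp

/-- Weyl monotonicity: sorted eigenvalues increase under the PSD order. -/
lemma weyl {A B : Matrix (Fin n) (Fin n) ℝ} (hA : A.IsHermitian) (hB : B.IsHermitian)
    (hBA : (B - A).PosSemidef) (k : Fin n) :
    hA.eigenvalues (Tuple.sort hA.eigenvalues k) ≤ hB.eigenvalues (Tuple.sort hB.eigenvalues k) := by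
  classical
  set σ := Tuple.sort hA.eigenvalues with hσ
  set τ := Tuple.sort hB.eigenvalues with hτ
  set sA : Finset (Fin n) := Finset.image σ (Finset.Ici k) with hsA
  set sB : Finset (Fin n) := Finset.image τ (Finset.Iic k) with hsB
  set S := Submodule.span ℝ (hA.eigenvectorBasis '' (sA : Set (Fin n))) with hS
  set T := Submodule.span ℝ (hB.eigenvectorBasis '' (sB : Set (Fin n))) with hT
  have hcardA : sA.card = n - k := by
    rw [hsA, Finset.card_image_of_injective _ σ.injective, Fin.card_Ici]
  have hcardB : sB.card = k + 1 := by
    rw [hsB, Finset.card_image_of_injective _ τ.injective, Fin.card_Iic]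
  have hrS : Module.finrank ℝ S = n - k := by rw [hS, finrank_span_basis_image, hcardA]
  have hrT : Module.finrank ℝ T = k + 1 := by rw [hT, finrank_span_basis_image, hcardB]
  have hdim : Module.finrank ℝ (EuclideanSpace ℝ (Fin n)) = n := by simp
  have hsup : Module.finrank ℝ (S ⊔ T : Submodule ℝ _) ≤ n := by
    calc Module.finrank ℝ (S ⊔ T : Submodule ℝ _)
        ≤ Module.finrank ℝ (EuclideanSpace ℝ (Fin n)) := Submodule.finrank_le _
      _ = n := hdim
  have hinf : 1 ≤ Module.finrank ℝ (S ⊓ T : Submodule ℝ _) := by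
    have := Submodule.finrank_sup_add_finrank_inf_eq S T
    have hk : (k : ℕ) < n := k.2
    omega
  obtain ⟨x, hxmem, hxne⟩ : ∃ x, x ∈ S ⊓ T ∧ x ≠ 0 := by
    by_contra h
    push_neg at h
    have : S ⊓ T = ⊥ := by
      rw [Submodule.eq_bot_iff]
      intro y hy
      by_contra hy0
      exact hy0 (by_contra fun h2 => h2 (h y hy))
    rw [this, finrank_bot] at hinf
    omega
  have hxS : x ∈ S := hxmem.1
  have hxT : x ∈ T := hxmem.2
  have hnorm : 0 < ‖x‖^2 := by
    have := norm_pos_iff.mpr hxne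
    positivity
  have hlow : hA.eigenvalues (σ k) * ‖x‖^2 ≤ ⟪x, Matrix.toEuclideanLin A x⟫ := by
    refine quad_lower hA hxS fun i hi => ?_
    rw [hsA] at hi
    obtain ⟨j, hj, rfl⟩ := Finset.mem_image.mp hi
    exact Tuple.monotone_sort hA.eigenvalues (Finset.mem_Ici.mp hj)
  have hup : ⟪x, Matrix.toEuclideanLin B x⟫ ≤ hB.eigenvalues (τ k) * ‖x‖^2 := by
    refine quad_upper hB hxT fun i hi => ?_
    rw [hsB] at hi
    obtain ⟨j, hj, rfl⟩ := Finset.mem_image.mp hi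
    exact Tuple.monotone_sort hB.eigenvalues (Finset.mem_Iic.mp hj)
  have hmid : ⟪x, Matrix.toEuclideanLin A x⟫ ≤ ⟪x, Matrix.toEuclideanLin B x⟫ := by
    have h0 : 0 ≤ x ⬝ᵥ ((B - A) *ᵥ x) := by simpa using hBA.dotProduct_mulVec_nonneg x
    rw [dot_eq_inner_toLin] at h0
    rw [map_sub] at h0
    simp only [LinearMap.sub_apply, inner_sub_right] at h0
    · linarith [h0]
  have := (hlow.trans hmid).trans hup
  exact le_of_mul_le_mul_right (by linarith) hnorm

lemma sum_g_mono {A B : Matrix (Fin n) (Fin n) ℝ} (hA : A.IsHermitian) (hB : B.IsHermitian)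
    (hBA : (B - A).PosSemidef) {g : ℝ → ℝ} (hg : Monotone g) :
    ∑ i, g (hA.eigenvalues i) ≤ ∑ i, g (hB.eigenvalues i) := by
  rw [← Equiv.sum_comp (Tuple.sort hA.eigenvalues) (fun i => g (hA.eigenvalues i)),
      ← Equiv.sum_comp (Tuple.sort hB.eigenvalues) (fun i => g (hB.eigenvalues i))]
  exact Finset.sum_le_sum fun k _ => hg (weyl hA hB hBA k)


end Helpers

/-- If `X W = Y` is feasible then the minimum of
`‖W‖_{S_{2/L}}^{2/L} = ∑ σ_i(W)^{2/L}` over all solutions `W` of `X W = Y` is attained at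
`W = X† Y`, with minimal value `∑ σ_i(X†Y)^{2/L}`. -/
theorem min_schatten_solution_is_pseudoinverse
    (N d K L : ℕ) (hL : 2 ≤ L)
    (X : Matrix (Fin N) (Fin d) ℝ) (Y : Matrix (Fin N) (Fin K) ℝ)
    (Xd : Matrix (Fin d) (Fin N) ℝ) (hXd : IsMoorePenrose X Xd)
    (hfeas : ∃ W : Matrix (Fin d) (Fin K) ℝ, X * W = Y) :
    X * (Xd * Y) = Y ∧
    IsLeast {x : ℝ | ∃ W : Matrix (Fin d) (Fin K) ℝ, X * W = Y ∧
        x = ∑ i, singVal W i ^ ((2 : ℝ) / L)}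
      (∑ i, singVal (Xd * Y) i ^ ((2 : ℝ) / L)) := by
  obtain ⟨hXd1, hXd2, hXd3, hXd4⟩ := hXd
  have hXd : X * Xd * X = X ∧ Xd * X * Xd = Xd ∧ (X * Xd)ᵀ = X * Xd ∧ (Xd * X)ᵀ = Xd * X :=
    ⟨hXd1, hXd2, hXd3, hXd4⟩
  obtain ⟨W0, hW0⟩ := hfeas
  have h1 : X * (Xd * Y) = Y := by
    rw [← hW0, ← Matrix.mul_assoc, ← Matrix.mul_assoc, hXd.1]
  refine ⟨h1, ⟨⟨Xd * Y, h1, rfl⟩, ?_⟩⟩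
  rintro x ⟨W, hW, rfl⟩
  -- projection P = Xd * X
  set P := Xd * X with hPdef
  have hP : Pᴴ = P := by
    have := hXd.2.2.2
    rw [Matrix.conjTranspose_eq_transpose_of_trivial]; exact this
  have hPP : P * P = P := by
    rw [hPdef, Matrix.mul_assoc, ← Matrix.mul_assoc X Xd X, hXd.1]
  have hPW : Xd * Y = P * W := by rw [← hW, hPdef, Matrix.mul_assoc]
  -- PSD of difference
  have key : Wᴴ * W - (Xd * Y)ᴴ * (Xd * Y) = (W - P * W)ᴴ * (W - P * W) := by
    rw [hPW]
    simp only [Matrix.conjTranspose_sub, Matrix.conjTranspose_mul, hP,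
      Matrix.sub_mul, Matrix.mul_sub]
    rw [show Wᴴ * P * (P * W) = Wᴴ * (P * P) * W by
      simp only [Matrix.mul_assoc], hPP]
    simp only [Matrix.mul_assoc]
    abel
  have hpsd : ((Wᴴ * W) - ((Xd * Y)ᴴ * (Xd * Y))).PosSemidef := by
    rw [key]; exact Matrix.posSemidef_conjTranspose_mul_self _
  -- monotone g
  have hp : (0:ℝ) ≤ (2:ℝ)/L := by positivity
  have hg : Monotone (fun t : ℝ => Real.sqrt t ^ ((2:ℝ)/L)) := fun a b hab =>
    Real.rpow_le_rpow (Real.sqrt_nonneg _) (Real.sqrt_le_sqrt hab) hp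
  exact sum_g_mono (Matrix.isHermitian_conjTranspose_mul_self _)
    (Matrix.isHermitian_conjTranspose_mul_self _) hpsd hg
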